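/- Suppose a specification language L ⊆ (2^{I∪O})^ω is recognized by a deterministic parity word automaton D with state set Q. If L is (V, H, C, G)-realizable by some TGE with memory set M (of any size), then L is (V, H, C, G)-realizable by a TGE with the same state space whose memory set is Q. -/

import Mathlib

/-- LTL formulas over atomic propositions of type `α`. -/
inductive LTL (α : Type) : Type where
  | tt : LTL α
  | ff : LTL α
  | atom : α → LTL α
  | not : LTL α → LTL α
  | and : LTL α → LTL α → LTL α
  | or : LTL α → LTL α → LTL α
  | next : LTL α → LTL α
  | untl : LTL α → LTL α → LTL α

namespace LTL

variable {α β : Type}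

/-- Satisfaction of an LTL formula at position `j` of an infinite word. -/
def satAt (w : ℕ → Set α) : ℕ → LTL α → Prop
  | _, .tt => True
  | _, .ff => False
  | j, .atom a => a ∈ w j
  | j, .not φ => ¬ satAt w j φ
  | j, .and φ ψ => satAt w j φ ∧ satAt w j ψ
  | j, .or φ ψ => satAt w j φ ∨ satAt w j ψ
  | j, .next φ => satAt w (j+1) φ
  | j, .untl φ ψ => ∃ k, j ≤ k ∧ satAt w k ψ ∧ ∀ l, j ≤ l → l < k → satAt w l φ

/-- A word satisfies a formula if it satisfies it at position 0. -/
def sat (w : ℕ → Set α) (φ : LTL α) : Prop := satAt w 0 φ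

/-- Eventually. -/
def F (φ : LTL α) : LTL α := untl tt φ
/-- Always. -/
def G (φ : LTL α) : LTL α := not (F (not φ))
/-- Boolean equivalence. -/
def iff_ (φ ψ : LTL α) : LTL α := or (and φ ψ) (and (not φ) (not ψ))
/-- `Xpow k φ` is `X^k φ`. -/
def Xpow : ℕ → LTL α → LTL α
  | 0, φ => φ
  | k+1, φ => next (Xpow k φ)
/-- `Fpow k φ` is `F^{k+1} φ`: "`φ` holds in at least `k+1` positions".
    (`F^1 p = F p`, `F^{j+1} p = F (p ∧ X (F^j p))`.) -/
def Fpow : ℕ → LTL α → LTL α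
  | 0, φ => F φ
  | k+1, φ => F (and φ (next (Fpow k φ)))

/-- Relabeling of atoms. -/
def map (f : α → β) : LTL α → LTL β
  | .tt => .tt
  | .ff => .ff
  | .atom a => .atom (f a)
  | .not φ => .not (map f φ)
  | .and φ ψ => .and (map f φ) (map f ψ)
  | .or φ ψ => .or (map f φ) (map f ψ)
  | .next φ => .next (map f φ)
  | .untl φ ψ => .untl (map f φ) (map f ψ)

/-- A formula is temporal-operator free (propositional). -/
def temporalFree : LTL α → Bool
  | .tt => true
  | .ff => true
  | .atom _ => true
  | .not φ => temporalFree φ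
  | .and φ ψ => temporalFree φ && temporalFree ψ
  | .or φ ψ => temporalFree φ && temporalFree ψ
  | .next _ => false
  | .untl _ _ => false

/-- `props ψ`: the maximal propositional subformulas of `ψ`. -/
def props : LTL α → List (LTL α)
  | .tt => [.tt]
  | .ff => [.ff]
  | .atom a => [.atom a]
  | .not φ => if temporalFree (LTL.not φ) then [.not φ] else props φ
  | .and φ ψ => if temporalFree (LTL.and φ ψ) then [.and φ ψ] else props φ ++ props ψ
  | .or φ ψ => if temporalFree (LTL.or φ ψ) then [.or φ ψ] else props φ ++ props ψ
  | .next φ => props φ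
  | .untl φ ψ => props φ ++ props ψ

/-- All atoms of the formula satisfy predicate `p`. -/
def atomsAll (p : α → Bool) : LTL α → Bool
  | .tt => true
  | .ff => true
  | .atom a => p a
  | .not φ => atomsAll p φ
  | .and φ ψ => atomsAll p φ && atomsAll p ψ
  | .or φ ψ => atomsAll p φ && atomsAll p ψ
  | .next φ => atomsAll p φ
  | .untl φ ψ => atomsAll p φ && atomsAll p ψ

/-- Maximal subformulas all of whose atoms satisfy `p` (used for `cl_H`). -/
def clP (p : α → Bool) : LTL α → List (LTL α)
  | .tt => []
  | .ff => []
  | .atom a => if p a then [.atom a] else []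
  | .not φ => if atomsAll p (LTL.not φ) then [.not φ] else clP p φ
  | .and φ ψ => if atomsAll p (LTL.and φ ψ) then [.and φ ψ] else clP p φ ++ clP p ψ
  | .or φ ψ => if atomsAll p (LTL.or φ ψ) then [.or φ ψ] else clP p φ ++ clP p ψ
  | .next φ => clP p φ
  | .untl φ ψ => clP p φ ++ clP p ψ

/-- `clH p φ`: maximal subformulas of formulas in `props φ` all of whose atoms
    satisfy `p` (i.e. are hidden signals). -/
def clH (p : α → Bool) (φ : LTL α) : List (LTL α) :=
  (props φ).foldr (fun ψ acc => clP p ψ ++ acc) []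

/-- Propositional satisfaction of a formula by a single assignment. -/
def propSat (σ : Set α) (φ : LTL α) : Prop := satAt (fun _ => σ) 0 φ

end LTL

/-- A (full-visibility) finite-state transducer with inputs `ι`, outputs `o`
    and states `S`. -/
structure Transducer (ι o S : Type) where
  init : S
  trans : S → Set ι → S
  out : S → Set ι → Set o

namespace Transducer

variable {ι o S : Type}

/-- The run of a transducer on an input word. -/
def run (T : Transducer ι o S) (wI : ℕ → Set ι) : ℕ → S
  | 0 => T.init
  | j+1 => T.trans (run T wI j) (wI j)

/-- The computation of a transducer on an input word, as a word over `2^{I ∪ O}`. -/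
def comp (T : Transducer ι o S) (wI : ℕ → Set ι) (j : ℕ) : Set (ι ⊕ o) :=
  Sum.inl '' wI j ∪ Sum.inr '' T.out (T.run wI j) (wI j)

/-- `(I,O)`-realizability. -/
def Realizes (T : Transducer ι o S) (φ : LTL (ι ⊕ o)) : Prop :=
  ∀ wI, LTL.sat (T.comp wI) φ

end Transducer

/-- A transducer with a guided environment (TGE): visible inputs `ν`, hidden
    inputs `η`, controlled outputs `γc`, guided outputs `γg`, states `S`,
    environment memory `M`.  Each transition emits an assignment to the
    controlled outputs together with a program `M × 2^H → M × 2^G`. -/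
structure TGE (ν η γc γg S M : Type) where
  init : S
  m0 : M
  trans : S → Set ν → S
  out : S → Set ν → Set γc × (M → Set η → M × Set γg)

namespace TGE

variable {ν η γc γg S M : Type}

/-- The run of a TGE depends only on the visible inputs. -/
def run (T : TGE ν η γc γg S M) (wV : ℕ → Set ν) : ℕ → S
  | 0 => T.init
  | j+1 => T.trans (run T wV j) (wV j)

/-- The environment's memory sequence, obtained by iterating the emitted
    programs on the hidden inputs. -/
def mem (T : TGE ν η γc γg S M) (wV : ℕ → Set ν) (wH : ℕ → Set η) : ℕ → M
  | 0 => T.m0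
  | j+1 => ((T.out (T.run wV j) (wV j)).2 (mem T wV wH j) (wH j)).1

/-- The guided output at step `j`. -/
def guided (T : TGE ν η γc γg S M) (wV : ℕ → Set ν) (wH : ℕ → Set η) (j : ℕ) :
    Set γg :=
  ((T.out (T.run wV j) (wV j)).2 (T.mem wV wH j) (wH j)).2

/-- The computation of a TGE, over `2^{(V ∪ H) ∪ (C ∪ G)}`. -/
def comp (T : TGE ν η γc γg S M) (wV : ℕ → Set ν) (wH : ℕ → Set η) (j : ℕ) :
    Set ((ν ⊕ η) ⊕ (γc ⊕ γg)) :=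
  Sum.inl '' (Sum.inl '' wV j ∪ Sum.inr '' wH j) ∪
    Sum.inr '' (Sum.inl '' (T.out (T.run wV j) (wV j)).1 ∪
                 Sum.inr '' T.guided wV wH j)

/-- `(V,H,C,G)`-realizability of an LTL specification. -/
def Realizes (T : TGE ν η γc γg S M) (φ : LTL ((ν ⊕ η) ⊕ (γc ⊕ γg))) : Prop :=
  ∀ wV wH, LTL.sat (T.comp wV wH) φ

/-- `(V,H,C,G)`-realizability of an arbitrary language. -/
def RealizesL (T : TGE ν η γc γg S M)
    (L : Set (ℕ → Set ((ν ⊕ η) ⊕ (γc ⊕ γg)))) : Prop :=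
  ∀ wV wH, T.comp wV wH ∈ L

end TGE

/-- A deterministic parity word automaton over alphabet `A`. -/
structure DPA (A Q : Type) where
  init : Q
  trans : Q → A → Q
  prio : Q → ℕ

namespace DPA

variable {A Q : Type}

def run (D : DPA A Q) (w : ℕ → A) : ℕ → Q
  | 0 => D.init
  | j+1 => D.trans (run D w j) (w j)

/-- Acceptance: the maximal priority visited infinitely often is even. -/
def Accepts (D : DPA A Q) (w : ℕ → A) : Prop :=
  Even (sSup (D.prio '' {q | ∀ N, ∃ n, N ≤ n ∧ D.run w n = q}))

/-- The language recognized by the automaton. -/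
def lang (D : DPA A Q) : Set (ℕ → A) := {w | D.Accepts w}

end DPA

namespace PDet

open List

/-- value `n` occurs infinitely often in `π`. -/
def InfOcc (π : ℕ → ℕ) (n : ℕ) : Prop := ∀ N, ∃ j, N ≤ j ∧ π j = n

/-- every odd value occurring infinitely often is dominated by a larger
value occurring infinitely often. -/
def Good (π : ℕ → ℕ) : Prop :=
  ∀ c, Odd c → InfOcc π c → ∃ c', c < c' ∧ InfOcc π c'

instance (n : ℕ) : WellFoundedLT (Fin n) := inferInstance

variable {P A B : Type}

theorem suffix_eq_drop {x z : List A} (h : x <:+ z) :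
    x = z.drop (z.length - x.length) := by
  obtain ⟨t, rfl⟩ := h
  rw [List.length_append, Nat.add_sub_cancel, List.drop_left]

theorem suffix_of_suffix_le {x y z : List A} (hx : x <:+ z) (hy : y <:+ z)
    (hl : x.length ≤ y.length) : x <:+ y := by
  have hy' : y.length ≤ z.length := hy.length_le
  rw [suffix_eq_drop hx, suffix_eq_drop hy]
  exact List.drop_suffix_drop_left z (by omega)

theorem suffix_total {x y z : List A} (hx : x <:+ z) (hy : y <:+ z) :
    x <:+ y ∨ y <:+ x := by
  rcases le_total x.length y.length with h | h
  · exact Or.inl (suffix_of_suffix_le hx hy h)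
  · exact Or.inr (suffix_of_suffix_le hy hx h)

theorem suffix_antisymm {x y : List A} (h1 : x <:+ y) (h2 : y <:+ x) : x = y :=
  List.IsSuffix.eq_of_length h1 (le_antisymm h1.length_le h2.length_le)

variable (a0 : A)

/-- the `j`-th element counted from the end. -/
def nth (l : List A) (j : ℕ) : A := l.reverse.getD j a0

theorem nth_cons_lt {a : A} {t : List A} {j : ℕ} (h : j < t.length) :
    nth a0 (a :: t) j = nth a0 t j := by
  simp only [nth, List.reverse_cons]
  exact List.getD_append _ _ _ _ (by simpa using h)

theorem nth_cons_self {a : A} {t : List A} :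
    nth a0 (a :: t) t.length = a := by
  simp only [nth, List.reverse_cons]
  rw [List.getD_append_right _ _ _ _ (by simp)]
  simp

theorem nth_agree {x y : List A} (h : x <:+ y) {j : ℕ} (hj : j < x.length) :
    nth a0 y j = nth a0 x j := by
  obtain ⟨t, rfl⟩ := h
  simp only [nth, List.reverse_append]
  exact List.getD_append _ _ _ _ (by simpa using hj)

/-- reversed history of the first `j` letters of `wa`. -/
def hist (wa : ℕ → A) : ℕ → List A
  | 0 => []
  | j+1 => wa j :: hist wa j

@[simp] theorem length_hist (wa : ℕ → A) (j : ℕ) : (hist wa j).length = j := by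
  induction j with
  | zero => rfl
  | succ j ih => simp [hist, ih]

theorem hist_suffix (wa : ℕ → A) {j m : ℕ} (h : j ≤ m) :
    hist wa j <:+ hist wa m := by
  induction m with
  | zero => cases Nat.le_zero.mp h; exact suffix_rfl
  | succ m ih =>
    rcases eq_or_lt_of_le h with rfl | h'
    · exact suffix_rfl
    · exact (ih (Nat.lt_succ_iff.mp h')).trans (List.suffix_cons _ _)

theorem hist_eq_of_nth (wa : ℕ → A) :
    ∀ l : List A, (∀ j, j < l.length → wa j = nth a0 l j) → hist wa l.length = l := by
  intro l
  induction l with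
  | nil => intro _; rfl
  | cons a t ih =>
    intro hl
    have h1 : hist wa t.length = t := by
      apply ih
      intro j hj
      rw [hl j (by simp; omega), nth_cons_lt a0 hj]
    have h2 : wa t.length = a := by
      rw [hl t.length (by simp), nth_cons_self]
    simp only [List.length_cons, hist, h1, h2]

variable (step : P → A → B → P) (σ : List A → B) (p0 : P) (prio : P → ℕ)

/-- the position reached along the (reversed) history `l`, where the
protagonist answers according to `σ`. -/
def pos : List A → P
  | [] => p0
  | a :: t => step (pos t) a (σ (a :: t))

/-- positional play from `p0` following the positional strategy `τ`. -/
def play (τ : P → A → B) (wa : ℕ → A) : ℕ → P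
  | 0 => p0
  | j+1 => step (play τ wa j) (wa j) (τ (play τ wa j) (wa j))

/-- nodes strictly between `x` (exclusive) and `y` (inclusive). -/
def NB (x y : List A) : Set (List A) := {z | z ≠ x ∧ x <:+ z ∧ z <:+ y}

/-- `SRel c x y` : `x` strictly extends `y`, all intermediate priorities
are `≤ c`, and priority `c` actually occurs in between. -/
def SRel (c : ℕ) (x y : List A) : Prop :=
  y ≠ x ∧ y <:+ x ∧ (∀ z ∈ NB y x, prio (pos step σ p0 z) ≤ c) ∧
    ∃ z ∈ NB y x, prio (pos step σ p0 z) = c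

theorem NB_cons (a : A) (t : List A) : NB t (a :: t) = {a :: t} := by
  ext z
  constructor
  · rintro ⟨h1, h2, h3⟩
    have l1 : t.length ≤ z.length := h2.length_le
    have l2 : z.length ≤ t.length + 1 := by simpa using h3.length_le
    have : z.length ≠ t.length := fun he => h1 (List.IsSuffix.eq_of_length h2 he.symm).symm
    exact (List.IsSuffix.eq_of_length h3 (by simp; omega))
  · rintro rfl
    exact ⟨by simp, List.suffix_cons _ _, suffix_rfl⟩

theorem srel_wf (a0 : A)
    (Hwin : ∀ wa : ℕ → A, Good fun j => prio (pos step σ p0 (hist wa j)))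
    {c : ℕ} (hc : Odd c) : WellFounded (SRel step σ p0 prio c) := by
  by_contra hwf
  have hex0 : ∃ x, ¬ Acc (SRel step σ p0 prio c) x := by
    by_contra hall
    push_neg at hall
    exact hwf ⟨hall⟩
  obtain ⟨x0, hx0⟩ := hex0
  have hstep0 : ∀ x : {x : List A // ¬ Acc (SRel step σ p0 prio c) x},
      ∃ y : {y : List A // ¬ Acc (SRel step σ p0 prio c) y}, SRel step σ p0 prio c y.1 x.1 := by
    rintro ⟨x, hx⟩
    by_contra hn
    push_neg at hn
    refine hx (Acc.intro x ?_)
    intro y hy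
    by_contra hacc
    exact (hn ⟨y, hacc⟩ hy).elim
  classical
  let F : {x : List A // ¬ Acc (SRel step σ p0 prio c) x} →
      {x : List A // ¬ Acc (SRel step σ p0 prio c) x} := fun x => (hstep0 x).choose
  let G : ℕ → {x : List A // ¬ Acc (SRel step σ p0 prio c) x} := fun n => F^[n] ⟨x0, hx0⟩
  set g : ℕ → List A := fun n => (G n).1 with hg
  have hstep : ∀ n, SRel step σ p0 prio c (g (n+1)) (g n) := by
    intro n
    have : G (n+1) = F (G n) := Function.iterate_succ_apply' F n _
    rw [hg]
    simp only [this]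
    exact (hstep0 (G n)).choose_spec
  have hsuf : ∀ n, g n <:+ g (n+1) := fun n => (hstep n).2.1
  have hlen : ∀ n, (g n).length < (g (n+1)).length := by
    intro n
    rcases lt_or_eq_of_le (hsuf n).length_le with h | h
    · exact h
    · exact absurd (List.IsSuffix.eq_of_length (hsuf n) h) (hstep n).1
  have hsufm : ∀ {n m : ℕ}, n ≤ m → g n <:+ g m := by
    intro n m h
    induction m with
    | zero => cases Nat.le_zero.mp h; exact suffix_rfl
    | succ m ih =>
      rcases eq_or_lt_of_le h with rfl | h'
      · exact suffix_rfl
      · exact (ih (Nat.lt_succ_iff.mp h')).trans (hsuf m)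
  have hlenm : ∀ n, n ≤ (g n).length := by
    intro n
    induction n with
    | zero => exact Nat.zero_le _
    | succ n ih => exact lt_of_le_of_lt ih (hlen n)
  set wa : ℕ → A := fun j => nth a0 (g (j+1)) j with hwa
  have hjlt : ∀ j, j < (g (j+1)).length :=
    fun j => lt_of_lt_of_le (Nat.lt_succ_self j) (hlenm (j+1))
  have hconsist : ∀ n, hist wa (g n).length = g n := by
    intro n
    apply hist_eq_of_nth
    intro j hj
    rcases le_total (j+1) n with h | h
    · exact (nth_agree a0 (hsufm h) (hjlt j)).symm
    · exact nth_agree a0 (hsufm h) hj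
  have hIO : InfOcc (fun j => prio (pos step σ p0 (hist wa j))) c := by
    intro N
    obtain ⟨z, ⟨hz1, hz2, hz3⟩, hzp⟩ := (hstep N).2.2.2
    have hl1 : (g N).length < z.length := by
      rcases lt_or_eq_of_le hz2.length_le with h | h
      · exact h
      · exact absurd (List.IsSuffix.eq_of_length hz2 h).symm hz1
    refine ⟨z.length, by have := hlenm N; omega, ?_⟩
    have hz : hist wa z.length = z := by
      apply List.IsSuffix.eq_of_length
      · apply suffix_of_suffix_le _ hz3 (by simp)
        rw [← hconsist (N+1)]
        exact hist_suffix wa hz3.length_le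
      · simp
    show prio (pos step σ p0 (hist wa z.length)) = c
    rw [hz]; exact hzp
  have htail : ∀ j, (g 0).length < j → prio (pos step σ p0 (hist wa j)) ≤ c := by
    intro j hj
    have hex : ∃ n, ¬ ((g n).length < j) := ⟨j, by have := hlenm j; omega⟩
    classical
    have hn1 : Nat.find hex ≠ 0 := by
      intro h0
      exact (Nat.find_spec hex) (h0 ▸ hj)
    obtain ⟨n, hn⟩ : ∃ n, Nat.find hex = n + 1 := Nat.exists_eq_succ_of_ne_zero hn1
    have hlt : (g n).length < j := by
      have := Nat.find_min hex (m := n) (by omega)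
      exact not_not.mp this
    have hle : j ≤ (g (n+1)).length := by
      have := Nat.find_spec hex
      rw [hn] at this
      omega
    have hz1 : hist wa j <:+ g (n+1) := by
      rw [← hconsist (n+1)]
      exact hist_suffix wa hle
    have hz2 : g n <:+ hist wa j := by
      rw [← hconsist n]
      exact hist_suffix wa hlt.le
    have hz3 : hist wa j ≠ g n := by
      intro he
      have := congrArg List.length he
      simp at this
      omega
    exact (hstep n).2.2.1 _ ⟨hz3, hz2, hz1⟩
  obtain ⟨c', hcc', hio'⟩ := Hwin wa c hc hIO
  obtain ⟨j, hjN, hjc⟩ := hio' ((g 0).length + 1)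
  have h2 := htail j (by omega)
  simp only at hjc
  omega

theorem rnk_le {α : Type} {r : α → α → Prop} (w : WellFounded r) {x y : α}
    (h : ∀ z, r z x → r z y) : (w.apply x).rank ≤ (w.apply y).rank := by
  rw [Acc.rank_eq, Acc.rank_eq]
  refine Ordinal.iSup_le ?_
  rintro ⟨z, hz⟩
  have he : ((w.apply x).inv hz).rank = ((w.apply y).inv (h z hz)).rank := rfl
  rw [he]
  exact Ordinal.le_iSup
    (fun b : {b // r b y} => Order.succ ((w.apply y).inv b.2).rank) ⟨z, h z hz⟩

theorem rnk_lt {α : Type} {r : α → α → Prop} (w : WellFounded r) {x y : α}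
    (h : r x y) : (w.apply x).rank < (w.apply y).rank := by
  have := Acc.rank_lt_of_rel (w.apply y) h
  exact this

/-- ordinal signature: rank in the relation `SRel c`, or `0` if it is
not well-founded (it will always be well-founded where we use it). -/
noncomputable def alph (step : P → A → B → P) (σ : List A → B) (p0 : P)
    (prio : P → ℕ) (c : ℕ) (x : List A) : Ordinal.{0} :=
  open Classical in
  if w : WellFounded (SRel step σ p0 prio c) then (w.apply x).rank else 0

theorem alph_mono {c : ℕ} {x y : List A} (hxy : y <:+ x) (hne : y ≠ x)
    (hbet : ∀ z ∈ NB y x, prio (pos step σ p0 z) ≤ c) :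
    alph step σ p0 prio c x ≤ alph step σ p0 prio c y := by
  by_cases w : WellFounded (SRel step σ p0 prio c)
  case pos =>
    unfold alph
    rw [dif_pos w, dif_pos w]
    refine rnk_le w ?_
    intro u hu
    obtain ⟨hu1, hu2, hu3, hu4⟩ := hu
    refine ⟨?_, hxy.trans hu2, ?_, ?_⟩
    · intro hyu
      exact hne (suffix_antisymm hxy (hyu ▸ hu2))
    · rintro z ⟨hz1, hz2, hz3⟩
      rcases suffix_total hz3 hu2 (z := u) with hc1 | hc1
      · exact hbet z ⟨hz1, hz2, hc1⟩
      · by_cases hzx : z = x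
        · exact hbet z ⟨hz1, hz2, hzx ▸ suffix_rfl⟩
        · exact hu3 z ⟨hzx, hc1, hz3⟩
    · obtain ⟨z, ⟨hz1, hz2, hz3⟩, hz4⟩ := hu4
      refine ⟨z, ⟨?_, hxy.trans hz2, hz3⟩, hz4⟩
      intro hzy
      exact hz1 (suffix_antisymm hz2 (hzy ▸ hxy)).symm
  case neg =>
    unfold alph
    rw [dif_neg w]
    exact zero_le

theorem alph_strict {c : ℕ} {x y : List A}
    (w : WellFounded (SRel step σ p0 prio c))
    (h : SRel step σ p0 prio c x y) :
    alph step σ p0 prio c x < alph step σ p0 prio c y := by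
  unfold alph
  rw [dif_pos w, dif_pos w]
  exact rnk_lt w h

theorem ne_cons_self (a : A) (t : List A) : t ≠ a :: t := by
  intro h
  have := congrArg List.length h
  simp at this

theorem alph_cons_le {a : A} {t : List A} {c : ℕ}
    (hc : prio (pos step σ p0 (a :: t)) ≤ c) :
    alph step σ p0 prio c (a :: t) ≤ alph step σ p0 prio c t := by
  apply alph_mono step σ p0 prio (List.suffix_cons a t) (ne_cons_self a t)
  intro z hz
  rw [NB_cons] at hz
  cases hz
  exact hc

theorem alph_cons_lt {a : A} {t : List A} {c : ℕ}
    (w : WellFounded (SRel step σ p0 prio c))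
    (hc : prio (pos step σ p0 (a :: t)) = c) :
    alph step σ p0 prio c (a :: t) < alph step σ p0 prio c t := by
  apply alph_strict step σ p0 prio w
  refine ⟨ne_cons_self a t, List.suffix_cons a t, ?_, ⟨a :: t, ?_, hc⟩⟩
  · intro z hz
    rw [NB_cons] at hz
    cases hz
    exact hc.le
  · rw [NB_cons]
    rfl

/-- the signature tuple at a node: component `i` is the rank for priority `d - i`. -/
noncomputable def sigt (step : P → A → B → P) (σ : List A → B) (p0 : P)
    (prio : P → ℕ) (d : ℕ) (x : List A) : Fin (d+1) → Ordinal.{0} :=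
  fun i => alph step σ p0 prio (d - (i : ℕ)) x

/-- a node of minimal signature realizing the position `p`. -/
noncomputable def sel (step : P → A → B → P) (σ : List A → B) (p0 : P)
    (prio : P → ℕ) (d : ℕ) (p : P) : List A :=
  open Classical in
  if hp : ∃ x, pos step σ p0 x = p then
    Function.argminOn (fun x => toLex (sigt step σ p0 prio d x))
      {x | pos step σ p0 x = p} hp
  else []

theorem sel_pos (d : ℕ) {p : P} (hp : ∃ x, pos step σ p0 x = p) :
    pos step σ p0 (sel step σ p0 prio d p) = p := by
  unfold sel
  rw [dif_pos hp]
  exact Function.argminOn_mem (fun x => toLex (sigt step σ p0 prio d x))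
    {x | pos step σ p0 x = p} hp

theorem sel_min (d : ℕ) {p : P} {x : List A} (hx : pos step σ p0 x = p) :
    toLex (sigt step σ p0 prio d (sel step σ p0 prio d p)) ≤
      toLex (sigt step σ p0 prio d x) := by
  unfold sel
  rw [dif_pos ⟨x, hx⟩]
  exact le_of_not_gt (Function.not_lt_argminOn (fun x => toLex (sigt step σ p0 prio d x))
    {x | pos step σ p0 x = p} hx)

theorem toLex_lt_of_le_of_ne {n : ℕ} {x y : Fin n → Ordinal.{0}}
    (hle : ∀ i, x i ≤ y i) (hne : x ≠ y) : toLex x < toLex y :=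
  lt_of_le_of_ne (Pi.toLex_monotone (Pi.le_def.mpr hle))
    (fun h => hne (toLex_inj.mp h))

/-- truncation of a tuple to its first `m+1` components. -/
def trunc (n : ℕ) (m : ℕ) (x : Fin n → Ordinal.{0}) : Fin n → Ordinal.{0} :=
  fun i => if (i : ℕ) ≤ m then x i else 0

theorem trunc_le_of_le {n m : ℕ} {x y : Fin n → Ordinal.{0}}
    (h : toLex x ≤ toLex y) : toLex (trunc n m x) ≤ toLex (trunc n m y) := by
  rcases eq_or_lt_of_le h with he | hlt
  · have hxy := toLex_inj.mp he
    rw [hxy]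
  · obtain ⟨i, hbelow, hi⟩ := hlt
    simp only [Pi.toLex_apply] at hbelow hi
    by_cases him : (i : ℕ) ≤ m
    · refine le_of_lt ⟨i, ?_, ?_⟩
      · intro j hj
        show (if (j:ℕ) ≤ m then x j else 0) = (if (j:ℕ) ≤ m then y j else 0)
        by_cases hjm : (j:ℕ) ≤ m
        · rw [if_pos hjm, if_pos hjm, hbelow j hj]
        · rw [if_neg hjm, if_neg hjm]
      · show (if (i:ℕ) ≤ m then x i else 0) < (if (i:ℕ) ≤ m then y i else 0)
        rw [if_pos him, if_pos him]
        exact hi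
    · have he : trunc n m x = trunc n m y := by
        funext j
        show (if (j:ℕ) ≤ m then x j else 0) = (if (j:ℕ) ≤ m then y j else 0)
        by_cases hjm : (j:ℕ) ≤ m
        · have hji : j < i := by
            rw [Fin.lt_def]
            omega
          rw [if_pos hjm, if_pos hjm, hbelow j hji]
        · rw [if_neg hjm, if_neg hjm]
      rw [show trunc n m x = trunc n m y from he]

theorem posdet (a0 : A) (d : ℕ) (hbd : ∀ p, prio p ≤ d)
    (Hwin : ∀ wa : ℕ → A, Good fun j => prio (pos step σ p0 (hist wa j))) :
    ∃ τ : P → A → B, ∀ wa : ℕ → A,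
      Good fun j => prio (play step p0 τ wa j) := by
  classical
  set τ : P → A → B := fun p a => σ (a :: sel step σ p0 prio d p) with hτ
  refine ⟨τ, ?_⟩
  intro wa
  have hreach : ∀ j, ∃ x, pos step σ p0 x = play step p0 τ wa j := by
    intro j
    induction j with
    | zero => exact ⟨[], rfl⟩
    | succ j ih =>
      refine ⟨wa j :: sel step σ p0 prio d (play step p0 τ wa j), ?_⟩
      show step (pos step σ p0 (sel step σ p0 prio d (play step p0 τ wa j))) (wa j)
          (σ (wa j :: sel step σ p0 prio d (play step p0 τ wa j))) = _
      rw [sel_pos step σ p0 prio d ih]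
      rfl
  have hkey : ∀ j, play step p0 τ wa (j+1) =
      pos step σ p0 (wa j :: sel step σ p0 prio d (play step p0 τ wa j)) := by
    intro j
    show step _ _ _ =
      step (pos step σ p0 (sel step σ p0 prio d (play step p0 τ wa j))) (wa j)
        (σ (wa j :: sel step σ p0 prio d (play step p0 τ wa j)))
    rw [sel_pos step σ p0 prio d (hreach j)]
  intro c hodd hio
  by_contra hnot
  push_neg at hnot
  obtain ⟨j0, _, hj0⟩ := hio 0
  simp only at hj0
  have hcd : c ≤ d := hj0 ▸ hbd _
  have hbound : ∃ N, ∀ j, N ≤ j → prio (play step p0 τ wa j) ≤ c := by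
    have h1 : ∀ v ∈ Finset.Icc (c+1) d, ∃ Nv, ∀ j, Nv ≤ j →
        prio (play step p0 τ wa j) ≠ v := by
      intro v hv
      rw [Finset.mem_Icc] at hv
      have h2 := hnot v (by omega)
      unfold InfOcc at h2
      push_neg at h2
      obtain ⟨Nv, hNv⟩ := h2
      exact ⟨Nv, fun j hj => hNv j hj⟩
    choose Nf hNf using h1
    refine ⟨(Finset.Icc (c+1) d).attach.sup (fun v => Nf v.1 v.2), ?_⟩
    intro j hj
    by_contra hcj
    push_neg at hcj
    have hmem : prio (play step p0 τ wa j) ∈ Finset.Icc (c+1) d := by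
      have := hbd (play step p0 τ wa j)
      rw [Finset.mem_Icc]
      omega
    have hle : Nf _ hmem ≤ (Finset.Icc (c+1) d).attach.sup (fun v => Nf v.1 v.2) :=
      Finset.le_sup (f := fun v => Nf v.1 v.2) (Finset.mem_attach _ ⟨_, hmem⟩)
    exact hNf _ hmem j (le_trans hle hj) rfl
  obtain ⟨N, hN⟩ := hbound
  set m : ℕ := d - c with hm
  set Ψ : ℕ → Lex (Fin (d+1) → Ordinal.{0}) := fun j =>
    toLex (trunc (d+1) m (sigt step σ p0 prio d
      (sel step σ p0 prio d (play step p0 τ wa j)))) with hΨ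
  have hstep1 : ∀ j, N ≤ j → Ψ (j+1) ≤ Ψ j ∧
      (prio (play step p0 τ wa (j+1)) = c → Ψ (j+1) < Ψ j) := by
    intro j hj
    set x := sel step σ p0 prio d (play step p0 τ wa j) with hx
    have hkeyj := hkey j
    have hc' : prio (play step p0 τ wa (j+1)) ≤ c := hN (j+1) (by omega)
    have hpc : prio (pos step σ p0 (wa j :: x)) ≤ c := by
      rw [← hkeyj]; exact hc'
    have hcomp : ∀ i : Fin (d+1),
        trunc (d+1) m (sigt step σ p0 prio d (wa j :: x)) i ≤
          trunc (d+1) m (sigt step σ p0 prio d x) i := by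
      intro i
      show (if ((i:ℕ)) ≤ m then sigt step σ p0 prio d (wa j :: x) i else 0) ≤
        (if ((i:ℕ)) ≤ m then sigt step σ p0 prio d x i else 0)
      by_cases him : (i:ℕ) ≤ m
      · rw [if_pos him, if_pos him]
        apply alph_cons_le
        exact le_trans hpc (by omega)
      · rw [if_neg him, if_neg him]
    have hmid : toLex (trunc (d+1) m (sigt step σ p0 prio d (wa j :: x))) ≤
        toLex (trunc (d+1) m (sigt step σ p0 prio d x)) :=
      Pi.toLex_monotone (Pi.le_def.mpr hcomp)
    have hfirst : Ψ (j+1) ≤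
        toLex (trunc (d+1) m (sigt step σ p0 prio d (wa j :: x))) := by
      apply trunc_le_of_le
      exact sel_min step σ p0 prio d hkeyj.symm
    constructor
    · exact le_trans hfirst hmid
    · intro hcc
      have hwf := srel_wf step σ p0 prio a0 Hwin hodd
      have hstrict : alph step σ p0 prio c (wa j :: x) < alph step σ p0 prio c x := by
        apply alph_cons_lt step σ p0 prio hwf
        rw [← hkeyj]; exact hcc
      have hdm : d - ((⟨m, by omega⟩ : Fin (d+1)) : ℕ) = c := by
        show d - m = c
        omega
      have hne : trunc (d+1) m (sigt step σ p0 prio d (wa j :: x)) ≠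
          trunc (d+1) m (sigt step σ p0 prio d x) := by
        intro he
        have h3 := congrFun he ⟨m, by omega⟩
        simp only [trunc, if_pos (le_refl m)] at h3
        unfold sigt at h3
        rw [hdm] at h3
        exact absurd h3 (ne_of_lt hstrict)
      have hlt2 := toLex_lt_of_le_of_ne hcomp hne
      exact lt_of_le_of_lt hfirst hlt2
  have hanti : ∀ j k, N ≤ j → j ≤ k → Ψ k ≤ Ψ j := by
    intro j k hNj hjk
    induction k with
    | zero => cases Nat.le_zero.mp hjk; exact le_refl _
    | succ k ih =>
      rcases eq_or_lt_of_le hjk with rfl | h'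
      · exact le_refl _
      · exact le_trans (hstep1 k (by omega)).1 (ih (Nat.lt_succ_iff.mp h'))
  obtain ⟨o, homem, hmin⟩ :=
    (wellFounded_lt (α := Lex (Fin (d+1) → Ordinal.{0}))).has_min
      (Set.range (fun k : ℕ => Ψ (N + k))) ⟨Ψ N, ⟨0, by simp⟩⟩
  obtain ⟨n0, rfl⟩ := homem
  obtain ⟨j, hjn, hjc⟩ := hio (N + n0 + 1)
  simp only at hjc
  obtain ⟨jj, rfl⟩ : ∃ jj, j = jj + 1 := ⟨j - 1, by omega⟩
  have h1 : Ψ jj ≤ Ψ (N + n0) := hanti (N + n0) jj (by omega) (by omega)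
  have h2 : Ψ (jj + 1) < Ψ jj := (hstep1 jj (by omega)).2 hjc
  refine hmin (Ψ (jj+1)) ⟨jj + 1 - N, ?_⟩ (lt_of_lt_of_le h2 h1)
  show Ψ (N + (jj + 1 - N)) = Ψ (jj + 1)
  have harith : N + (jj + 1 - N) = jj + 1 := by omega
  rw [harith]

end PDet

namespace PDet

theorem pigeon {Q : Type} (r : ℕ → Q) (F : Finset Q)
    (hF : ∀ N, ∃ j, N ≤ j ∧ r j ∈ F) :
    ∃ q ∈ F, ∀ N, ∃ j, N ≤ j ∧ r j = q := by
  classical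
  by_contra hcon
  push_neg at hcon
  choose Nf hNf using hcon
  obtain ⟨j, hj, hjF⟩ := hF (F.attach.sup fun q => Nf q.1 q.2)
  have hle : Nf (r j) hjF ≤ F.attach.sup fun q => Nf q.1 q.2 :=
    Finset.le_sup (f := fun q => Nf q.1 q.2) (Finset.mem_attach F ⟨r j, hjF⟩)
  exact hNf (r j) hjF j (le_trans hle hj) rfl

theorem accepts_of_good {Aa Q : Type} [Fintype Q] (D : DPA Aa Q) (w : ℕ → Aa)
    (hg : Good fun j => D.prio (D.run w j)) : D.Accepts w := by
  classical
  obtain ⟨q1, -, hq1⟩ :=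
    pigeon (D.run w) Finset.univ (fun N => ⟨N, le_refl N, Finset.mem_univ _⟩)
  show Even (sSup (D.prio '' {q | ∀ N, ∃ n, N ≤ n ∧ D.run w n = q}))
  set Iq : Set Q := {q | ∀ N, ∃ n, N ≤ n ∧ D.run w n = q} with hIq
  have hfin : (D.prio '' Iq).Finite := (Set.toFinite Iq).image _
  have hnemp : (D.prio '' Iq).Nonempty := ⟨D.prio q1, ⟨q1, hq1, rfl⟩⟩
  obtain ⟨qs, hqs, hqsp⟩ := hnemp.csSup_mem hfin
  by_contra hodd
  rw [Nat.not_even_iff_odd] at hodd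
  have hio : InfOcc (fun j => D.prio (D.run w j)) (sSup (D.prio '' Iq)) := by
    intro N
    obtain ⟨n, hn, hrn⟩ := hqs N
    refine ⟨n, hn, ?_⟩
    show D.prio (D.run w n) = _
    rw [hrn, hqsp]
  obtain ⟨c', hlt, hio'⟩ := hg _ hodd hio
  have hpg : ∀ N, ∃ j, N ≤ j ∧
      D.run w j ∈ Finset.univ.filter (fun q => D.prio q = c') := by
    intro N
    obtain ⟨j, hj, hjp⟩ := hio' N
    refine ⟨j, hj, ?_⟩
    rw [Finset.mem_filter]
    exact ⟨Finset.mem_univ _, hjp⟩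
  obtain ⟨q', hq'F, hq'⟩ := pigeon (D.run w) _ hpg
  rw [Finset.mem_filter] at hq'F
  have hmem : c' ∈ D.prio '' Iq := ⟨q', hq', hq'F.2⟩
  have := le_csSup hfin.bddAbove hmem
  omega

theorem good_of_accepts {Aa Q : Type} [Fintype Q] (D : DPA Aa Q) (w : ℕ → Aa)
    (ha : D.Accepts w) : Good fun j => D.prio (D.run w j) := by
  classical
  intro c hodd hio
  have hEven : Even (sSup (D.prio '' {q | ∀ N, ∃ n, N ≤ n ∧ D.run w n = q})) := ha
  set Iq : Set Q := {q | ∀ N, ∃ n, N ≤ n ∧ D.run w n = q} with hIq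
  have hpg : ∀ N, ∃ j, N ≤ j ∧
      D.run w j ∈ Finset.univ.filter (fun q => D.prio q = c) := by
    intro N
    obtain ⟨j, hj, hjp⟩ := hio N
    refine ⟨j, hj, ?_⟩
    rw [Finset.mem_filter]
    exact ⟨Finset.mem_univ _, hjp⟩
  obtain ⟨q0, hq0F, hq0⟩ := pigeon (D.run w) _ hpg
  rw [Finset.mem_filter] at hq0F
  have hcmem : c ∈ D.prio '' Iq := ⟨q0, hq0, hq0F.2⟩
  have hfin : (D.prio '' Iq).Finite := (Set.toFinite Iq).image _
  have hnemp : (D.prio '' Iq).Nonempty := ⟨c, hcmem⟩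
  obtain ⟨qs, hqs, hqsp⟩ := hnemp.csSup_mem hfin
  refine ⟨sSup (D.prio '' Iq), ?_, ?_⟩
  · have hle := le_csSup hfin.bddAbove hcmem
    have hne : c ≠ sSup (D.prio '' Iq) := by
      rintro rfl
      rw [← Nat.not_odd_iff_even] at hEven
      exact hEven hodd
    omega
  · intro N
    obtain ⟨n, hn, hrn⟩ := hqs N
    refine ⟨n, hn, ?_⟩
    show D.prio (D.run w n) = _
    rw [hrn, hqsp]

variable {ν η γc γg S M : Type}

/-- the letter emitted by the product construction. -/
def Ltr (T : TGE ν η γc γg S M) (s : S) (v : Set ν) (hh : Set η) (g : Set γg) :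
    Set ((ν ⊕ η) ⊕ (γc ⊕ γg)) :=
  Sum.inl '' (Sum.inl '' v ∪ Sum.inr '' hh) ∪
    Sum.inr '' (Sum.inl '' (T.out s v).1 ∪ Sum.inr '' g)

def simS (T : TGE ν η γc γg S M) : List (Set ν × Set η) → S
  | [] => T.init
  | a :: t => T.trans (simS T t) a.1

def simM (T : TGE ν η γc γg S M) : List (Set ν × Set η) → M
  | [] => T.m0
  | a :: t => ((T.out (simS T t) a.1).2 (simM T t) a.2).1

/-- strategy extracted from the TGE `T`. -/
def sig0 (T : TGE ν η γc γg S M) : List (Set ν × Set η) → Set γg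
  | [] => ∅
  | a :: t => ((T.out (simS T t) a.1).2 (simM T t) a.2).2

/-- the one-step function of the product of the TGE projection with `D`. -/
def stepTD {Q : Type} (T : TGE ν η γc γg S M)
    (D : DPA (Set ((ν ⊕ η) ⊕ (γc ⊕ γg))) Q) :
    S × Q → (Set ν × Set η) → Set γg → S × Q :=
  fun p a g => (T.trans p.1 a.1, D.trans p.2 (Ltr T p.1 a.1 a.2 g))

theorem simS_hist (T : TGE ν η γc γg S M) (wa : ℕ → Set ν × Set η) (j : ℕ) :
    simS T (hist wa j) = T.run (fun i => (wa i).1) j := by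
  induction j with
  | zero => rfl
  | succ j ih =>
    show T.trans (simS T (hist wa j)) (wa j).1 = _
    rw [ih]
    rfl

theorem simM_hist (T : TGE ν η γc γg S M) (wa : ℕ → Set ν × Set η) (j : ℕ) :
    simM T (hist wa j) = T.mem (fun i => (wa i).1) (fun i => (wa i).2) j := by
  induction j with
  | zero => rfl
  | succ j ih =>
    show ((T.out (simS T (hist wa j)) (wa j).1).2 (simM T (hist wa j)) (wa j).2).1 = _
    rw [ih, simS_hist]
    rfl

theorem sig0_hist (T : TGE ν η γc γg S M) (wa : ℕ → Set ν × Set η) (j : ℕ) :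
    sig0 T (wa j :: hist wa j) =
      T.guided (fun i => (wa i).1) (fun i => (wa i).2) j := by
  show ((T.out (simS T (hist wa j)) (wa j).1).2 (simM T (hist wa j)) (wa j).2).2 = _
  rw [simM_hist, simS_hist]
  rfl

theorem pos_hist {Q : Type} (T : TGE ν η γc γg S M)
    (D : DPA (Set ((ν ⊕ η) ⊕ (γc ⊕ γg))) Q) (wa : ℕ → Set ν × Set η) (j : ℕ) :
    pos (stepTD T D) (sig0 T) (T.init, D.init) (hist wa j) =
      (T.run (fun i => (wa i).1) j,
        D.run (T.comp (fun i => (wa i).1) (fun i => (wa i).2)) j) := by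
  induction j with
  | zero => rfl
  | succ j ih =>
    show stepTD T D (pos (stepTD T D) (sig0 T) (T.init, D.init) (hist wa j))
        (wa j) (sig0 T (wa j :: hist wa j)) = _
    rw [ih, sig0_hist]
    show (T.trans (T.run (fun i => (wa i).1) j) (wa j).1,
      D.trans (D.run (T.comp (fun i => (wa i).1) (fun i => (wa i).2)) j)
        (Ltr T (T.run (fun i => (wa i).1) j) (wa j).1 (wa j).2
          (T.guided (fun i => (wa i).1) (fun i => (wa i).2) j))) = _
    have hl : Ltr T (T.run (fun i => (wa i).1) j) (wa j).1 (wa j).2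
        (T.guided (fun i => (wa i).1) (fun i => (wa i).2) j) =
        T.comp (fun i => (wa i).1) (fun i => (wa i).2) j := rfl
    rw [hl]
    rfl

end PDet

/-- If a language `L` recognized by a deterministic parity word
automaton with state set `Q` is `(V,H,C,G)`-realizable by some TGE with memory
set `M` (of any size), then `L` is `(V,H,C,G)`-realizable by a TGE with the
same state space whose memory set is `Q`. -/
theorem stmt12 {ν η γc γg S M Q : Type} [Fintype Q]
    (D : DPA (Set ((ν ⊕ η) ⊕ (γc ⊕ γg))) Q)
    (T : TGE ν η γc γg S M) (h : T.RealizesL D.lang) :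
    ∃ T' : TGE ν η γc γg S Q, T'.RealizesL D.lang := by
  classical
  have hbd : ∀ p : S × Q, (fun p : S × Q => D.prio p.2) p ≤ Finset.univ.sup D.prio :=
    fun p => Finset.le_sup (Finset.mem_univ p.2)
  have Hwin : ∀ wa : ℕ → Set ν × Set η,
      PDet.Good fun j => (fun p : S × Q => D.prio p.2)
        (PDet.pos (PDet.stepTD T D) (PDet.sig0 T) (T.init, D.init) (PDet.hist wa j)) := by
    intro wa
    have he : (fun j => (fun p : S × Q => D.prio p.2)
        (PDet.pos (PDet.stepTD T D) (PDet.sig0 T) (T.init, D.init) (PDet.hist wa j))) =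
        fun j => D.prio (D.run (T.comp (fun i => (wa i).1) (fun i => (wa i).2)) j) := by
      funext j
      rw [PDet.pos_hist T D wa j]
    rw [he]
    exact PDet.good_of_accepts D _ (h _ _)
  obtain ⟨τ, hτ⟩ := PDet.posdet (PDet.stepTD T D) (PDet.sig0 T) (T.init, D.init)
    (fun p : S × Q => D.prio p.2) (∅, ∅) (Finset.univ.sup D.prio) hbd Hwin
  refine ⟨⟨T.init, D.init, T.trans, fun s v =>
    ((T.out s v).1, fun q hh =>
      (D.trans q (PDet.Ltr T s v hh (τ (s, q) (v, hh))), τ (s, q) (v, hh)))⟩, ?_⟩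
  set T' : TGE ν η γc γg S Q := ⟨T.init, D.init, T.trans, fun s v =>
    ((T.out s v).1, fun q hh =>
      (D.trans q (PDet.Ltr T s v hh (τ (s, q) (v, hh))), τ (s, q) (v, hh)))⟩ with hT'
  intro wV wH
  have hrun : ∀ j, T'.run wV j = T.run wV j := by
    intro j
    induction j with
    | zero => rfl
    | succ j ih =>
      show T.trans (T'.run wV j) (wV j) = T.trans (T.run wV j) (wV j)
      rw [ih]
  have hmemstep : ∀ j, T'.mem wV wH (j+1) =
      D.trans (T'.mem wV wH j) (PDet.Ltr T (T.run wV j) (wV j) (wH j)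
        (τ (T.run wV j, T'.mem wV wH j) (wV j, wH j))) := by
    intro j
    show ((T'.out (T'.run wV j) (wV j)).2 (T'.mem wV wH j) (wH j)).1 = _
    rw [hrun j]
  have hplay : ∀ j, PDet.play (PDet.stepTD T D) (T.init, D.init) τ
      (fun i => (wV i, wH i)) j = (T.run wV j, T'.mem wV wH j) := by
    intro j
    induction j with
    | zero => rfl
    | succ j ih =>
      show PDet.stepTD T D (PDet.play (PDet.stepTD T D) (T.init, D.init) τ
          (fun i => (wV i, wH i)) j) (wV j, wH j)
          (τ (PDet.play (PDet.stepTD T D) (T.init, D.init) τ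
            (fun i => (wV i, wH i)) j) (wV j, wH j)) = _
      rw [ih]
      show (T.trans (T.run wV j) (wV j),
        D.trans (T'.mem wV wH j) (PDet.Ltr T (T.run wV j) (wV j) (wH j)
          (τ (T.run wV j, T'.mem wV wH j) (wV j, wH j)))) = _
      rw [← hmemstep j]
      rfl
  have hguid : ∀ j, T'.guided wV wH j =
      τ (T.run wV j, T'.mem wV wH j) (wV j, wH j) := by
    intro j
    show ((T'.out (T'.run wV j) (wV j)).2 (T'.mem wV wH j) (wH j)).2 = _
    rw [hrun j]
  have hcomp : ∀ j, T'.comp wV wH j =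
      PDet.Ltr T (T.run wV j) (wV j) (wH j)
        (τ (T.run wV j, T'.mem wV wH j) (wV j, wH j)) := by
    intro j
    show Sum.inl '' (Sum.inl '' wV j ∪ Sum.inr '' wH j) ∪
      Sum.inr '' (Sum.inl '' (T'.out (T'.run wV j) (wV j)).1 ∪
        Sum.inr '' T'.guided wV wH j) = _
    rw [hguid j, hrun j]
    rfl
  have hDrun : ∀ j, D.run (T'.comp wV wH) j = T'.mem wV wH j := by
    intro j
    induction j with
    | zero => rfl
    | succ j ih =>
      show D.trans (D.run (T'.comp wV wH) j) (T'.comp wV wH j) = _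
      rw [ih, hcomp j, ← hmemstep j]
  show D.Accepts (T'.comp wV wH)
  apply PDet.accepts_of_good
  have he2 : (fun j => D.prio (D.run (T'.comp wV wH) j)) =
      fun j => (fun p : S × Q => D.prio p.2)
        (PDet.play (PDet.stepTD T D) (T.init, D.init) τ (fun i => (wV i, wH i)) j) := by
    funext j
    rw [hDrun j, hplay j]
  rw [he2]
  exact hτ (fun i => (wV i, wH i))
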